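/- Given two linear orders L₁, L₂ on a finite set V whose intersection is a partial order P, assign to each v ∈ V the interval [a_v, b_v] where a_v is the rank of v in L₁ (negated suitably) and b_v is determined by the reverse rank in L₂ such that all left endpoints precede all right endpoints. Then for all u ≠ v: u < v in P iff the interval of u properly contains the interval of v, and u, v incomparable in P iff their intervals overlap without containment. -/

import Mathlib

/-- The closed interval on the real line represented by a pair of endpoints. -/
def iv (p : ℝ × ℝ) : Set ℝ := Set.Icc p.1 p.2

/-- Two intervals overlap: they intersect and neither contains the other. -/
def Overlaps (p q : ℝ × ℝ) : Prop :=
  (iv p ∩ iv q).Nonempty ∧ ¬ iv p ⊆ iv q ∧ ¬ iv q ⊆ iv p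

/-- Given two linear orders `L₁, L₂` on a finite set whose intersection is the
partial order `P = r`, place all left endpoints in `(−1, 0)` ordered by `L₁` and all
right endpoints in `(0, 1)` ordered by the reverse of `L₂`.  Then for distinct `u, v`:
`u < v` in `P` iff the interval of `u` properly contains that of `v`, and `u, v` are
incomparable in `P` iff their intervals overlap without containment. -/
theorem stmt15 {V : Type*} [Fintype V] (s₁ s₂ : LinearOrder V)
    (r : V → V → Prop)
    (hr : ∀ u v, r u v ↔ (s₁.lt u v ∧ s₂.lt u v))
    (I : V → ℝ × ℝ)
    (hleft : ∀ v, (I v).1 ∈ Set.Ioo (-1 : ℝ) 0)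
    (hright : ∀ v, (I v).2 ∈ Set.Ioo (0 : ℝ) 1)
    (hL1 : ∀ u v, s₁.lt u v ↔ (I u).1 < (I v).1)
    (hL2 : ∀ u v, s₂.lt u v ↔ (I v).2 < (I u).2) :
    ∀ u v, u ≠ v →
      (r u v ↔ iv (I v) ⊂ iv (I u)) ∧
      ((¬ r u v ∧ ¬ r v u) ↔ Overlaps (I u) (I v)) := by

  intro u v huv
  obtain ⟨hau1, hau2⟩ := hleft u
  obtain ⟨hav1, hav2⟩ := hleft v
  obtain ⟨hbu1, hbu2⟩ := hright u
  obtain ⟨hbv1, hbv2⟩ := hright v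
  have h0u : (I u).1 ≤ (I u).2 := le_of_lt (lt_trans hau2 hbu1)
  have h0v : (I v).1 ≤ (I v).2 := le_of_lt (lt_trans hav2 hbv1)
  have hne1 : (I u).1 ≠ (I v).1 := by
    intro h
    rcases @lt_trichotomy V s₁ u v with h1 | h1 | h1
    · exact absurd ((hL1 u v).1 h1) (by rw [h]; exact lt_irrefl _)
    · exact huv h1
    · exact absurd ((hL1 v u).1 h1) (by rw [h]; exact lt_irrefl _)
  have hne2 : (I u).2 ≠ (I v).2 := by
    intro h
    rcases @lt_trichotomy V s₂ u v with h1 | h1 | h1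
    · exact absurd ((hL2 u v).1 h1) (by rw [h]; exact lt_irrefl _)
    · exact huv h1
    · exact absurd ((hL2 v u).1 h1) (by rw [h]; exact lt_irrefl _)
  have hsub1 : (iv (I v) ⊆ iv (I u)) ↔ ((I u).1 ≤ (I v).1 ∧ (I v).2 ≤ (I u).2) :=
    Set.Icc_subset_Icc_iff h0v
  have hsub2 : (iv (I u) ⊆ iv (I v)) ↔ ((I v).1 ≤ (I u).1 ∧ (I u).2 ≤ (I v).2) :=
    Set.Icc_subset_Icc_iff h0u
  have hiff1 : r u v ↔ ((I u).1 < (I v).1 ∧ (I v).2 < (I u).2) := by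
    rw [hr, hL1, hL2]
  have hiff2 : r v u ↔ ((I v).1 < (I u).1 ∧ (I u).2 < (I v).2) := by
    rw [hr, hL1, hL2]
  constructor
  · rw [hiff1, Set.ssubset_iff_subset_ne]
    constructor
    · rintro ⟨h1, h2⟩
      refine ⟨hsub1.2 ⟨h1.le, h2.le⟩, ?_⟩
      intro heq
      have : iv (I u) ⊆ iv (I v) := heq ▸ subset_rfl
      obtain ⟨c1, c2⟩ := hsub2.1 this
      linarith
    · rintro ⟨hs, -⟩
      obtain ⟨h1, h2⟩ := hsub1.1 hs
      exact ⟨lt_of_le_of_ne h1 hne1, lt_of_le_of_ne h2 hne2.symm⟩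
  · have h0mem : (0 : ℝ) ∈ iv (I u) ∩ iv (I v) :=
      ⟨⟨hau2.le, hbu1.le⟩, ⟨hav2.le, hbv1.le⟩⟩
    constructor
    · rintro ⟨h1, h2⟩
      rw [hiff1] at h1; rw [hiff2] at h2
      push_neg at h1 h2
      refine ⟨⟨0, h0mem⟩, ?_, ?_⟩
      · rw [hsub2]
        rintro ⟨c1, c2⟩
        rcases lt_or_gt_of_ne hne1 with ha | ha
        · linarith
        · exact hne2 (le_antisymm c2 (h2 ha))
      · rw [hsub1]
        rintro ⟨c1, c2⟩
        rcases lt_or_gt_of_ne hne1 with ha | ha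
        · rcases lt_or_gt_of_ne hne2 with hb | hb
          · linarith
          · linarith [h1 ha]
        · linarith [h2 ha]
    · rintro ⟨-, hns1, hns2⟩
      rw [hsub2] at hns1; rw [hsub1] at hns2
      push_neg at hns1 hns2
      constructor
      · rw [hiff1]; rintro ⟨c1, c2⟩
        exact absurd (hns2 c1.le) (not_lt.2 c2.le)
      · rw [hiff2]; rintro ⟨c1, c2⟩
        exact absurd (hns1 c1.le) (not_lt.2 c2.le)
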